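/- arXiv:1310.3004 — 9 statements merged into one kernel-verified Lean document; each statement's English description precedes it below -/
import Mathlib

section
/- (Fisher consistency of FLAME) Let C > 0, θ ∈ [0,1], and p ∈ (0,1) with p ≠ 1/2. Then every global minimizer f* ∈ ℝ of the conditional risk R satisfies: f* > 0 if p > 1/2, and f* < 0 if p < 1/2; that is, sign(f*) = sign(p − 1/2). -/
/-- The DWD loss with parameter `C`. -/
noncomputable def dwdLoss (C u : ℝ) : ℝ :=
  if u ≤ 1 / Real.sqrt C then 2 * Real.sqrt C - C * u else 1 / u

/-- The FLAME loss with parameters `C` and `θ`. -/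
noncomputable def flameLoss (C θ u : ℝ) : ℝ :=
  max (dwdLoss C u - θ * Real.sqrt C) 0

/-- The conditional risk `R(f) = p·L(f,θ) + (1−p)·L(−f,θ)`. -/
noncomputable def condRisk (C θ p f : ℝ) : ℝ :=
  p * flameLoss C θ f + (1 - p) * flameLoss C θ (-f)

lemma flame_nonpos (C θ u : ℝ) (hC : 0 < C) (hθ : θ ≤ 1) (hu : u ≤ 0) :
    flameLoss C θ u = 2 * Real.sqrt C - C * u - θ * Real.sqrt C := by
  have hs : 0 < Real.sqrt C := Real.sqrt_pos.mpr hC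
  have hu' : u ≤ 1 / Real.sqrt C := le_trans hu (by positivity)
  unfold flameLoss dwdLoss
  rw [if_pos hu']
  apply max_eq_left
  nlinarith [mul_nonpos_of_nonneg_of_nonpos hC.le hu]

lemma flame_nonneg_bound (C θ v : ℝ) (hC : 0 < C) (hθ : θ ≤ 1) (hv : 0 ≤ v) :
    flameLoss C θ v ≤ 2 * Real.sqrt C - θ * Real.sqrt C := by
  have hs : 0 < Real.sqrt C := Real.sqrt_pos.mpr hC
  unfold flameLoss dwdLoss
  apply max_le _ (by nlinarith)
  split_ifs with h
  · nlinarith [mul_nonneg hC.le hv]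
  · push_neg at h
    have h0 : 0 < v := lt_trans (by positivity) h
    have : 1 / v < Real.sqrt C := by
      rw [div_lt_iff₀ h0]
      rw [div_lt_iff₀ hs] at h
      nlinarith
    nlinarith

lemma flame_at_inv_sqrt (C θ : ℝ) (hC : 0 < C) (hθ0 : 0 ≤ θ) (hθ : θ ≤ 1) :
    flameLoss C θ (1 / Real.sqrt C) = Real.sqrt C - θ * Real.sqrt C := by
  have hs : 0 < Real.sqrt C := Real.sqrt_pos.mpr hC
  have hss : Real.sqrt C * Real.sqrt C = C := Real.mul_self_sqrt hC.le
  have hd : C * (1 / Real.sqrt C) = Real.sqrt C := by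
    field_simp
    rw [sq, hss]
  unfold flameLoss dwdLoss
  rw [if_pos le_rfl, hd, max_eq_left (by nlinarith)]
  ring

lemma flame_at_neg_inv_sqrt (C θ : ℝ) (hC : 0 < C) (hθ0 : 0 ≤ θ) (hθ : θ ≤ 1) :
    flameLoss C θ (-(1 / Real.sqrt C)) = 3 * Real.sqrt C - θ * Real.sqrt C := by
  have hs : 0 < Real.sqrt C := Real.sqrt_pos.mpr hC
  have hss : Real.sqrt C * Real.sqrt C = C := Real.mul_self_sqrt hC.le
  have hd : C * (-(1 / Real.sqrt C)) = -Real.sqrt C := by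
    field_simp
    rw [sq, hss]
  have hle : -(1 / Real.sqrt C) ≤ 1 / Real.sqrt C := by
    have : 0 < 1 / Real.sqrt C := by positivity
    linarith
  unfold flameLoss dwdLoss
  rw [if_pos hle, hd, max_eq_left (by nlinarith)]
  ring

lemma condRisk_symm (C θ p f : ℝ) : condRisk C θ p f = condRisk C θ (1 - p) (-f) := by
  simp [condRisk, neg_neg]; ring

lemma flame_key (C θ p : ℝ) (hC : 0 < C) (hθ : θ ∈ Set.Icc (0 : ℝ) 1)
    (hp : p ∈ Set.Ioo (0 : ℝ) 1) (hphalf : 1 / 2 < p) (fstar : ℝ)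
    (h : ∀ f : ℝ, condRisk C θ p fstar ≤ condRisk C θ p f) : 0 < fstar := by
  obtain ⟨hθ0, hθ1⟩ := hθ
  obtain ⟨hp0, hp1⟩ := hp
  have hs : 0 < Real.sqrt C := Real.sqrt_pos.mpr hC
  by_contra hneg
  push_neg at hneg
  rcases lt_or_eq_of_le hneg with hlt | heq
  · -- fstar < 0 : compare with -fstar
    have h1 : flameLoss C θ fstar = 2 * Real.sqrt C - C * fstar - θ * Real.sqrt C :=
      flame_nonpos C θ fstar hC hθ1 hlt.le
    have h2 : flameLoss C θ (-fstar) ≤ 2 * Real.sqrt C - θ * Real.sqrt C :=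
      flame_nonneg_bound C θ (-fstar) hC hθ1 (by linarith)
    have hm := h (-fstar)
    unfold condRisk at hm
    rw [neg_neg] at hm
    rw [h1] at hm
    nlinarith [mul_pos (mul_pos (by linarith : (0:ℝ) < 2 * p - 1) hC) (by linarith : 0 < -fstar)]
  · -- fstar = 0 : compare with 1/√C
    subst heq
    have hm := h (1 / Real.sqrt C)
    unfold condRisk at hm
    rw [neg_zero] at hm
    rw [flame_nonpos C θ 0 hC hθ1 le_rfl, flame_at_inv_sqrt C θ hC hθ0 hθ1,
      flame_at_neg_inv_sqrt C θ hC hθ0 hθ1] at hm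
    nlinarith

theorem flame_fisher_consistent (C θ p : ℝ) (hC : 0 < C) (hθ : θ ∈ Set.Icc (0 : ℝ) 1)
    (hp : p ∈ Set.Ioo (0 : ℝ) 1) (hp2 : p ≠ 1 / 2) :
    ∀ fstar : ℝ, (∀ f : ℝ, condRisk C θ p fstar ≤ condRisk C θ p f) →
      ((1 / 2 < p → 0 < fstar) ∧ (p < 1 / 2 → fstar < 0)) := by
  intro fstar h
  obtain ⟨hp0, hp1⟩ := hp
  constructor
  · intro hp2'
    exact flame_key C θ p hC hθ ⟨hp0, hp1⟩ hp2' fstar h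
  · intro hp2'
    have hkey : 0 < -fstar := by
      apply flame_key C θ (1 - p) hC hθ ⟨by linarith, by linarith⟩ (by linarith) (-fstar)
      intro f
      have e1 := condRisk_symm C θ p fstar
      have e2 := condRisk_symm C θ p (-f)
      rw [neg_neg] at e2
      rw [← e1, ← e2]
      exact h (-f)
    linarith
end

section
/- Let C > 0, p ∈ (1/2, 1), and θ ∈ [0,1] with θ ≤ √((1−p)/p). Then the point f* = (1/√C)·√(p/(1−p)) is a global minimizer of the conditional risk R over ℝ. -/
lemma amgm_aux (a b x : ℝ) (ha : 0 ≤ a) (hb : 0 ≤ b) (hx : 0 < x) :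
    2 * Real.sqrt (a * b) ≤ a / x + b * x := by
  have hu : 0 ≤ a / x := div_nonneg ha hx.le
  have hv : 0 ≤ b * x := mul_nonneg hb hx.le
  have h1 : a * b = (a / x) * (b * x) := by field_simp
  rw [h1, Real.sqrt_mul hu]
  nlinarith [sq_nonneg (Real.sqrt (a / x) - Real.sqrt (b * x)),
    Real.sq_sqrt hu, Real.sq_sqrt hv, Real.sqrt_nonneg (a / x), Real.sqrt_nonneg (b * x)]

set_option maxHeartbeats 1000000 in
theorem condRisk_minimizer_explicit (C θ p : ℝ) (hC : 0 < C) (hθ : θ ∈ Set.Icc (0 : ℝ) 1)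
    (hp : p ∈ Set.Ioo (1 / 2 : ℝ) 1) (hθp : θ ≤ Real.sqrt ((1 - p) / p)) :
    ∀ f : ℝ,
      condRisk C θ p (1 / Real.sqrt C * Real.sqrt (p / (1 - p))) ≤ condRisk C θ p f := by
  obtain ⟨hθ0, hθ1⟩ := hθ
  obtain ⟨hp1, hp2⟩ := hp
  have hp0 : 0 < p := by linarith
  have hp1' : 0 < 1 - p := by linarith
  set s := Real.sqrt C with hsdef
  have hs : 0 < s := Real.sqrt_pos.mpr hC
  have hss : s * s = C := Real.mul_self_sqrt hC.le
  set r := Real.sqrt (p / (1 - p)) with hrdef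
  set q := Real.sqrt ((1 - p) / p) with hqdef
  set w := Real.sqrt (p * (1 - p)) with hwdef
  have hw0 : 0 ≤ w := Real.sqrt_nonneg _
  have hww : w * w = p * (1 - p) := Real.mul_self_sqrt (by positivity)
  have hq0 : 0 ≤ q := Real.sqrt_nonneg _
  have hr0 : 0 ≤ r := Real.sqrt_nonneg _
  have hpq : p * q = w := by
    rw [hqdef, hwdef, ← Real.sqrt_sq hp0.le, ← Real.sqrt_mul (by positivity)]
    congr 1
    field_simp
    ring
    rw [Real.sqrt_sq hp0.le]; ring
  have hpr : (1 - p) * r = w := by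
    rw [hrdef, hwdef, ← Real.sqrt_sq hp1'.le, ← Real.sqrt_mul (by positivity)]
    congr 1
    field_simp
    ring
    rw [Real.sq_sqrt (by nlinarith)]
  have hrw : r * w = p := by
    have h : (1 - p) * (r * w) = (1 - p) * p := by linear_combination w * hpr + hww
    exact mul_left_cancel₀ hp1'.ne' h
  have hqr : q * r = 1 := by
    have h : p * (q * r) = p * 1 := by linear_combination r * hpq + hrw
    exact mul_left_cancel₀ hp0.ne' h
  have hr1 : 1 < r := by
    have h : (1 : ℝ) < p / (1 - p) := by rw [lt_div_iff₀ hp1']; linarith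
    nlinarith [Real.mul_self_sqrt (show (0:ℝ) ≤ p / (1 - p) by positivity), hr0]
  have hrpos : 0 < r := by linarith
  have hf0 : 1 / s < 1 / s * r := by
    have h := one_div_pos.mpr hs
    nlinarith
  -- the value at the minimizer
  have hval : condRisk C θ p (1 / s * r) = 2 * w * s + 2 * (1 - p) * s - θ * s := by
    unfold condRisk flameLoss dwdLoss
    rw [← hsdef, ← hss]
    rw [if_neg (not_le.mpr hf0), if_pos (by nlinarith [one_div_pos.mpr hs] :
      -(1 / s * r) ≤ 1 / s)]
    have hinv : 1 / (1 / s * r) = s / r := by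
      field_simp
    have hsr : s / r = q * s := by
      rw [div_eq_iff hrpos.ne']
      linear_combination (-s) * hqr
    have hcc : s * s * -(1 / s * r) = -(s * r) := by
      field_simp
    have h1 : θ * s ≤ 1 / (1 / s * r) := by
      rw [hinv, hsr]
      nlinarith [mul_nonneg (by linarith : (0:ℝ) ≤ q - θ) hs.le]
    have h2 : θ * s ≤ 2 * s - s * s * -(1 / s * r) := by
      rw [hcc]
      have ha : θ * s ≤ 1 * s := mul_le_mul_of_nonneg_right hθ1 hs.le
      have hb : 0 ≤ s * r := mul_nonneg hs.le hr0
      linarith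
    rw [max_eq_left (by linarith), max_eq_left (by linarith), hinv, hsr, hcc]
    linear_combination s * hpq + s * hpr
  -- lower bound on the dwd risk
  have key : ∀ f : ℝ, 2 * w * s + 2 * (1 - p) * s ≤
      p * dwdLoss C f + (1 - p) * dwdLoss C (-f) := by
    intro f
    unfold dwdLoss
    rw [← hsdef, ← hss]
    by_cases h1 : f ≤ 1 / s
    · rw [if_pos h1]
      by_cases h2 : -f ≤ 1 / s
      · rw [if_pos h2]
        have hw12 : 2 * w ≤ 1 := by nlinarith [hww, hw0]
        have h1' : f * s ≤ 1 := (le_div_iff₀ hs).mp h1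
        have hcf : s * s * f ≤ s := by nlinarith [mul_le_mul_of_nonneg_left h1' hs.le]
        have hh1 : 0 ≤ (s - s * s * f) * (2 * p - 1) :=
          mul_nonneg (by linarith) (by linarith)
        have hh2 : 0 ≤ s * (1 - 2 * w) := mul_nonneg hs.le (by linarith)
        nlinarith [hh1, hh2]
      · rw [if_neg h2]
        push_neg at h2
        have hfneg : f < 0 := by nlinarith [one_div_pos.mpr hs]
        have ham := amgm_aux (1 - p) (p * (s * s)) (-f) hp1'.le (by positivity) (by linarith)
        have hsq : Real.sqrt ((1 - p) * (p * (s * s))) = w * s := by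
          rw [show (1 - p) * (p * (s * s)) = (p * (1 - p)) * (s * s) by ring,
            Real.sqrt_mul (by positivity), Real.sqrt_mul_self hs.le, ← hwdef]
        rw [hsq] at ham
        have hps : 0 ≤ s * (2 * p - 1) := mul_nonneg hs.le (by linarith)
        have ham' : 2 * (w * s) ≤ (1 - p) * (1 / -f) + p * (s * s) * -f := by
          rw [mul_one_div]; exact ham
        nlinarith [ham', hps]
    · rw [if_neg h1]
      push_neg at h1
      have hfpos : 0 < f := lt_trans (one_div_pos.mpr hs) h1
      rw [if_pos (by nlinarith [one_div_pos.mpr hs] : -f ≤ 1 / s)]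
      have ham := amgm_aux p ((1 - p) * (s * s)) f hp0.le (by positivity) hfpos
      have hsq : Real.sqrt (p * ((1 - p) * (s * s))) = w * s := by
        rw [show p * ((1 - p) * (s * s)) = (p * (1 - p)) * (s * s) by ring,
          Real.sqrt_mul (by positivity), Real.sqrt_mul_self hs.le, ← hwdef]
      rw [hsq] at ham
      have ham' : 2 * (w * s) ≤ p * (1 / f) + (1 - p) * (s * s) * f := by
        rw [mul_one_div]; exact ham
      linarith [ham']
  intro f
  have hA := le_max_left (dwdLoss C f - θ * s) 0
  have hB := le_max_left (dwdLoss C (-f) - θ * s) 0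
  have hlb : p * dwdLoss C f + (1 - p) * dwdLoss C (-f) - θ * s ≤ condRisk C θ p f := by
    unfold condRisk flameLoss
    rw [← hsdef]
    nlinarith [mul_le_mul_of_nonneg_left hA hp0.le, mul_le_mul_of_nonneg_left hB hp1'.le]
  rw [hval]
  have hk := key f
  linarith
end

section
/- Let C > 0, θ ∈ [0,1], and p ∈ (0,1). Then the conditional risk R : ℝ → ℝ is continuous and convex, R(f) → +∞ as f → +∞ and as f → −∞, and R attains its global minimum at some point f* ∈ ℝ. -/
lemma dwd_hasDerivAt {C : ℝ} (hC : 0 < C) (u : ℝ) :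
    HasDerivAt (dwdLoss C) (if u ≤ 1 / Real.sqrt C then -C else -1/u^2) u := by
  have hs : 0 < Real.sqrt C := Real.sqrt_pos.2 hC
  set a := 1 / Real.sqrt C with ha
  have ha0 : 0 < a := by positivity
  have hCa : C * a = Real.sqrt C := by
    rw [ha, mul_one_div, div_eq_iff hs.ne', Real.mul_self_sqrt hC.le]
  have haa2 : a ^ 2 = 1 / C := by
    rw [ha, div_pow, one_pow, Real.sq_sqrt hC.le]
  have hinva : 1 / a = Real.sqrt C := by rw [ha, one_div_one_div]
  have hlin : ∀ x, HasDerivAt (fun x => 2 * Real.sqrt C - C * x) (-C) x := by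
    intro x
    simpa using ((hasDerivAt_id x).const_mul C).const_sub (2 * Real.sqrt C)
  have hval_a : dwdLoss C a = 1 / a := by
    simp only [dwdLoss, ← ha, if_pos le_rfl, hCa, hinva]; ring
  rcases lt_trichotomy u a with h | h | h
  · rw [if_pos h.le]
    apply (hlin u).congr_of_eventuallyEq
    filter_upwards [Iio_mem_nhds h] with x hx
    simp [dwdLoss, ← ha, (Set.mem_Iio.1 hx).le]
  · subst h
    rw [if_pos le_rfl]
    have hEq : ∀ x ∈ Set.Ici a, dwdLoss C x = 1 / x := by
      intro x hx
      rcases (Set.mem_Ici.1 hx).lt_or_eq with hlt | heq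
      · simp [dwdLoss, ← ha, not_le.2 hlt]
      · obtain rfl : x = a := heq.symm
        exact hval_a
    have h1 : HasDerivWithinAt (dwdLoss C) (-C) (Set.Iic a) a := by
      apply ((hlin a).hasDerivWithinAt).congr
      · intro x hx; simp [dwdLoss, ← ha, (Set.mem_Iic.1 hx : x ≤ a)]
      · simp [dwdLoss, ← ha]
    have h2 : HasDerivWithinAt (dwdLoss C) (-C) (Set.Ici a) a := by
      have hinv : HasDerivAt (fun x : ℝ => 1 / x) (-C) a := by
        have h := hasDerivAt_inv (ne_of_gt ha0)
        rw [haa2] at h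
        simpa [one_div] using h
      exact hinv.hasDerivWithinAt.congr hEq (hval_a)
    have h3 := h1.union h2
    rw [Set.Iic_union_Ici] at h3
    exact h3.hasDerivAt (by simp)
  · rw [if_neg (not_le.2 h)]
    have hu0 : 0 < u := ha0.trans h
    have hinv : HasDerivAt (fun x : ℝ => 1 / x) (-1/u^2) u := by
      simpa [one_div, neg_div] using hasDerivAt_inv (ne_of_gt hu0)
    apply hinv.congr_of_eventuallyEq
    filter_upwards [Ioi_mem_nhds h] with x hx
    simp [dwdLoss, ← ha, not_le.2 (Set.mem_Ioi.1 hx)]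

example : True := trivial

lemma dwd_differentiable {C : ℝ} (hC : 0 < C) : Differentiable ℝ (dwdLoss C) :=
  fun u => (dwd_hasDerivAt hC u).differentiableAt

lemma dwd_convex {C : ℝ} (hC : 0 < C) : ConvexOn ℝ Set.univ (dwdLoss C) := by
  have hs : 0 < Real.sqrt C := Real.sqrt_pos.2 hC
  have ha0 : 0 < 1 / Real.sqrt C := by positivity
  have hderiv : deriv (dwdLoss C) = fun u => if u ≤ 1 / Real.sqrt C then -C else -1/u^2 :=
    funext fun u => (dwd_hasDerivAt hC u).deriv
  apply Monotone.convexOn_univ_of_deriv (dwd_differentiable hC)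
  rw [hderiv]
  intro x y hxy
  have key : ∀ z : ℝ, 1 / Real.sqrt C < z → -C ≤ -1/z^2 := by
    intro z hz
    have hz0 : 0 < z := ha0.trans hz
    rw [neg_div, neg_le_neg_iff, one_div]
    rw [inv_le_comm₀ (by positivity) hC, ← one_div]
    calc (1:ℝ)/C = (1/Real.sqrt C)^2 := by
          rw [div_pow, one_pow, Real.sq_sqrt hC.le]
      _ ≤ z ^ 2 := by nlinarith
  by_cases hx : x ≤ 1 / Real.sqrt C <;> by_cases hy : y ≤ 1 / Real.sqrt C
  · simp only [if_pos hx, if_pos hy]; exact le_rfl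
  · simp only [if_pos hx, if_neg hy]
    exact key y (not_le.1 hy)
  · exact absurd (hxy.trans hy) hx
  · simp only [if_neg hx, if_neg hy]
    have hx0 : 0 < x := ha0.trans (not_le.1 hx)
    rw [neg_div, neg_div, neg_le_neg_iff]
    apply one_div_le_one_div_of_le (by positivity)
    nlinarith


lemma flame_continuous {C θ : ℝ} (hC : 0 < C) : Continuous (flameLoss C θ) := by
  have h1 : Continuous (dwdLoss C) := (dwd_differentiable hC).continuous
  exact (h1.sub continuous_const).max continuous_const

lemma flame_convex {C θ : ℝ} (hC : 0 < C) : ConvexOn ℝ Set.univ (flameLoss C θ) := by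
  have h1 : ConvexOn ℝ Set.univ (fun u => dwdLoss C u - θ * Real.sqrt C) :=
    (dwd_convex hC).add (convexOn_const _ convex_univ)
  exact h1.sup (convexOn_const 0 convex_univ)

lemma flame_neg_convex {C θ : ℝ} (hC : 0 < C) :
    ConvexOn ℝ Set.univ (fun f => flameLoss C θ (-f)) := by
  have h := (flame_convex (θ := θ) hC).comp_affineMap (-(AffineMap.id ℝ ℝ))
  simpa [Function.comp_def] using h

lemma flame_nonneg (C θ u : ℝ) : 0 ≤ flameLoss C θ u := le_max_right _ _

theorem condRisk_coercive_and_attains_min (C θ p : ℝ) (hC : 0 < C)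
    (hθ : θ ∈ Set.Icc (0 : ℝ) 1) (hp : p ∈ Set.Ioo (0 : ℝ) 1) :
    Continuous (condRisk C θ p) ∧
    ConvexOn ℝ Set.univ (condRisk C θ p) ∧
    Filter.Tendsto (condRisk C θ p) Filter.atTop Filter.atTop ∧
    Filter.Tendsto (condRisk C θ p) Filter.atBot Filter.atTop ∧
    ∃ fstar : ℝ, ∀ f : ℝ, condRisk C θ p fstar ≤ condRisk C θ p f := by
  obtain ⟨hp0, hp1⟩ := hp
  obtain ⟨hθ0, hθ1⟩ := hθ
  have hs : 0 < Real.sqrt C := Real.sqrt_pos.2 hC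
  have ha0 : 0 < 1 / Real.sqrt C := by positivity
  have hcont : Continuous (condRisk C θ p) := by
    exact (continuous_const.mul (flame_continuous hC)).add
      (continuous_const.mul ((flame_continuous hC).comp continuous_neg))
  have hconv : ConvexOn ℝ Set.univ (condRisk C θ p) := by
    have h1 := (flame_convex (θ := θ) hC).smul hp0.le
    have h2 := (flame_neg_convex (θ := θ) hC).smul (by linarith : (0:ℝ) ≤ 1 - p)
    have := h1.add h2
    simp only [smul_eq_mul, Pi.add_def] at this; exact this
  -- lower bounds
  have hlow1 : ∀ f : ℝ, 0 ≤ f →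
      (1 - p) * (Real.sqrt C + C * f) ≤ condRisk C θ p f := by
    intro f hf
    have hfa : -f ≤ 1 / Real.sqrt C := by linarith
    have hdwd : dwdLoss C (-f) = 2 * Real.sqrt C - C * (-f) := if_pos hfa
    have h1 : Real.sqrt C + C * f ≤ flameLoss C θ (-f) := by
      refine le_trans ?_ (le_max_left _ _)
      rw [hdwd]
      nlinarith
    have h2 : 0 ≤ p * flameLoss C θ f := mul_nonneg hp0.le (flame_nonneg _ _ _)
    unfold condRisk
    nlinarith [mul_le_mul_of_nonneg_left h1 (by linarith : (0:ℝ) ≤ 1 - p)]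
  have hlow2 : ∀ f : ℝ, f ≤ 0 →
      p * (Real.sqrt C - C * f) ≤ condRisk C θ p f := by
    intro f hf
    have hfa : f ≤ 1 / Real.sqrt C := by linarith
    have hdwd : dwdLoss C f = 2 * Real.sqrt C - C * f := if_pos hfa
    have h1 : Real.sqrt C - C * f ≤ flameLoss C θ f := by
      refine le_trans ?_ (le_max_left _ _)
      rw [hdwd]
      nlinarith
    have h2 : 0 ≤ (1 - p) * flameLoss C θ (-f) :=
      mul_nonneg (by linarith) (flame_nonneg _ _ _)
    unfold condRisk
    nlinarith [mul_le_mul_of_nonneg_left h1 hp0.le]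
  have htop : Filter.Tendsto (condRisk C θ p) Filter.atTop Filter.atTop := by
    have hg : Filter.Tendsto (fun f : ℝ => (1 - p) * (Real.sqrt C + C * f))
        Filter.atTop Filter.atTop := by
      apply Filter.Tendsto.const_mul_atTop (by linarith)
      exact Filter.tendsto_atTop_add_const_left _ _
        (Filter.Tendsto.const_mul_atTop hC Filter.tendsto_id)
    refine Filter.tendsto_atTop_mono' _ ?_ hg
    filter_upwards [Filter.eventually_ge_atTop 0] with f hf
    exact hlow1 f hf
  have hbot : Filter.Tendsto (condRisk C θ p) Filter.atBot Filter.atTop := by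
    have hg : Filter.Tendsto (fun f : ℝ => p * (Real.sqrt C - C * f))
        Filter.atBot Filter.atTop := by
      apply Filter.Tendsto.const_mul_atTop hp0
      have h1 : Filter.Tendsto (fun f : ℝ => C * (-f)) Filter.atBot Filter.atTop :=
        Filter.Tendsto.const_mul_atTop hC Filter.tendsto_neg_atBot_atTop
      have h2 := Filter.tendsto_atTop_add_const_left _ (Real.sqrt C) h1
      simpa [mul_neg, sub_eq_add_neg] using h2
    refine Filter.tendsto_atTop_mono' _ ?_ hg
    filter_upwards [Filter.eventually_le_atBot 0] with f hf
    exact hlow2 f hf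
  refine ⟨hcont, hconv, htop, hbot, ?_⟩
  apply hcont.exists_forall_le
  rw [cocompact_eq_atBot_atTop]
  exact hbot.sup htop
end

section
/- Let C > 0, θ ∈ (0,1], and p ∈ (0,1). Then every global minimizer f* of the conditional risk R satisfies −1/(θ√C) ≤ f* ≤ 1/(θ√C). -/
lemma flame_eq_zero (C θ u : ℝ) (hC : 0 < C) (hθ0 : 0 < θ) (hθ1 : θ ≤ 1)
    (hu : 1 / (θ * Real.sqrt C) ≤ u) : flameLoss C θ u = 0 := by
  have hs : 0 < Real.sqrt C := Real.sqrt_pos.2 hC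
  have hsC : Real.sqrt C * Real.sqrt C = C := Real.mul_self_sqrt hC.le
  have h1 : 1 ≤ u * (θ * Real.sqrt C) := (div_le_iff₀ (by positivity)).mp hu
  unfold flameLoss dwdLoss
  rw [max_eq_right]
  split_ifs with h
  · nlinarith [sq_nonneg (θ - 1), mul_le_mul_of_nonneg_right h1 hs.le, mul_pos hθ0 hs]
  · push_neg at h
    have hu0 : 0 < u := lt_trans (by positivity) h
    rw [sub_nonpos, div_le_iff₀ hu0]
    nlinarith

lemma flame_eq_neg (C θ u : ℝ) (hC : 0 < C) (hθ0 : 0 < θ) (hθ1 : θ ≤ 1)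
    (hu : u ≤ -(1 / (θ * Real.sqrt C))) :
    flameLoss C θ u = 2 * Real.sqrt C - C * u - θ * Real.sqrt C := by
  have hs : 0 < Real.sqrt C := Real.sqrt_pos.2 hC
  have hB : 0 < 1 / (θ * Real.sqrt C) := by positivity
  have hu0 : u < 0 := lt_of_le_of_lt hu (by linarith)
  unfold flameLoss dwdLoss
  rw [if_pos (le_of_lt (hu0.trans (by positivity))),
    max_eq_left (by nlinarith [mul_pos hC (neg_pos.mpr hu0)])]

theorem condRisk_minimizer_bounded (C θ p : ℝ) (hC : 0 < C) (hθ : θ ∈ Set.Ioc (0 : ℝ) 1)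
    (hp : p ∈ Set.Ioo (0 : ℝ) 1) :
    ∀ fstar : ℝ, (∀ f : ℝ, condRisk C θ p fstar ≤ condRisk C θ p f) →
      -(1 / (θ * Real.sqrt C)) ≤ fstar ∧ fstar ≤ 1 / (θ * Real.sqrt C) := by
  obtain ⟨hθ0, hθ1⟩ := hθ
  obtain ⟨hp0, hp1⟩ := hp
  have hs : 0 < Real.sqrt C := Real.sqrt_pos.2 hC
  set B : ℝ := 1 / (θ * Real.sqrt C) with hBdef
  have hB : 0 < B := by positivity
  intro fstar hmin
  have hBz : flameLoss C θ B = 0 := flame_eq_zero C θ B hC hθ0 hθ1 le_rfl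
  have hBn : flameLoss C θ (-B) = 2 * Real.sqrt C - C * (-B) - θ * Real.sqrt C :=
    flame_eq_neg C θ (-B) hC hθ0 hθ1 le_rfl
  constructor
  · by_contra h
    push_neg at h
    have h1 : flameLoss C θ fstar = 2 * Real.sqrt C - C * fstar - θ * Real.sqrt C :=
      flame_eq_neg C θ fstar hC hθ0 hθ1 h.le
    have h2 : flameLoss C θ (-fstar) = 0 :=
      flame_eq_zero C θ (-fstar) hC hθ0 hθ1 (by linarith)
    have key := hmin (-B)
    unfold condRisk at key
    rw [h1, h2, neg_neg, hBz] at key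
    rw [show flameLoss C θ (-B) = 2 * Real.sqrt C - C * (-B) - θ * Real.sqrt C from hBn] at key
    nlinarith [mul_pos (mul_pos hp0 hC) (show (0:ℝ) < -B - fstar by linarith)]
  · by_contra h
    push_neg at h
    have h1 : flameLoss C θ fstar = 0 := flame_eq_zero C θ fstar hC hθ0 hθ1 h.le
    have h2 : flameLoss C θ (-fstar) = 2 * Real.sqrt C - C * (-fstar) - θ * Real.sqrt C :=
      flame_eq_neg C θ (-fstar) hC hθ0 hθ1 (by linarith)
    have key := hmin B
    unfold condRisk at key
    rw [h1, h2, hBz, hBn] at key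
    nlinarith [mul_pos (mul_pos (show (0:ℝ) < 1 - p by linarith) hC)
      (show (0:ℝ) < fstar - B by linarith)]
end

section
/- (Stationarity characterization of FLAME under extreme imbalance) Let d ∈ ℕ, ν a Borel probability measure on ℝ^d, constants C, λ, θ, n₊, n₋, n° > 0, and points x₁,…,x_{n₊} ∈ ℝ^d with mean x̄₊. Define l_F : ℝ^d × ℝ → ℝ by l_F(ω,β) = (n₊+n₋)⁻¹·[ Σ_{i=1}^{n₊} ( (2−θ)√C − C(⟨xᵢ,ω⟩+β) ) + n°·∫ ( −(⟨x,ω⟩+β)⁻¹ − θ√C ) dν(x) ] + (λ/2)‖ω‖². Suppose that at (ω*, β*): (i) the functions x ↦ (⟨x,ω*⟩+β*)⁻² and x ↦ (⟨x,ω*⟩+β*)⁻²·x are ν-integrable, and the map (ω,β) ↦ ∫ −(⟨x,ω⟩+β)⁻¹ dν(x) has Fréchet derivative (h,t) ↦ ∫ (⟨x,ω*⟩+β*)⁻²·(⟨x,h⟩+t) dν(x) at (ω*,β*) (differentiation under the integral sign); and (ii) (ω*,β*) is a critical point of l_F (its Fréchet derivative vanishes). Then ∫ (⟨x,ω*⟩+β*)⁻²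 dν(x) = C·n₊/n°, and ω* = (C·n₊/((n₊+n₋)·λ)) · [ x̄₊ − ( ∫ (⟨x,ω*⟩+β*)⁻²·x dν(x) ) / ( ∫ (⟨x,ω*⟩+β*)⁻² dν(x) ) ]. Equivalently, with m = n₋/n₊, the prefactor is C/((1+m)λ). -/
open MeasureTheory
open scoped RealInnerProductSpace

set_option maxHeartbeats 2000000 in
theorem flame_stationarity_under_imbalance (d : ℕ)
    (ν : Measure (EuclideanSpace ℝ (Fin d))) [IsProbabilityMeasure ν]
    (C lam θ nm nzero : ℝ) (np : ℕ)
    (hC : 0 < C) (hlam : 0 < lam) (hθ : 0 < θ) (hnp : 0 < np)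
    (hnm : 0 < nm) (hnzero : 0 < nzero)
    (x : Fin np → EuclideanSpace ℝ (Fin d))
    (xbarPlus : EuclideanSpace ℝ (Fin d))
    (hxbar : xbarPlus = ((np : ℝ))⁻¹ • ∑ i, x i)
    (ωstar : EuclideanSpace ℝ (Fin d)) (βstar : ℝ)
    (lF : EuclideanSpace ℝ (Fin d) × ℝ → ℝ)
    (hlF : ∀ (ω : EuclideanSpace ℝ (Fin d)) (β : ℝ),
      lF (ω, β) = ((np : ℝ) + nm)⁻¹ *
          ((∑ i, ((2 - θ) * Real.sqrt C - C * (⟪x i, ω⟫ + β))) +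
            nzero * ∫ x', (-(⟪x', ω⟫ + β)⁻¹ - θ * Real.sqrt C) ∂ν) +
        lam / 2 * ‖ω‖ ^ 2)
    -- (i) integrability and differentiation under the integral sign
    (hInt1 : Integrable (fun x' => (⟪x', ωstar⟫ + βstar)⁻¹ ^ 2) ν)
    (hInt2 : Integrable (fun x' => ((⟪x', ωstar⟫ + βstar)⁻¹ ^ 2) • x') ν)
    (D : (EuclideanSpace ℝ (Fin d) × ℝ) →L[ℝ] ℝ)
    (hD : ∀ (h : EuclideanSpace ℝ (Fin d)) (t : ℝ),
      D (h, t) = ∫ x', (⟪x', ωstar⟫ + βstar)⁻¹ ^ 2 * (⟪x', h⟫ + t) ∂ν)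
    (hDeriv : HasFDerivAt
      (fun p : EuclideanSpace ℝ (Fin d) × ℝ => ∫ x', -(⟪x', p.1⟫ + p.2)⁻¹ ∂ν)
      D (ωstar, βstar))
    -- (ii) criticality of (ωstar, βstar)
    (hCrit : HasFDerivAt lF (0 : (EuclideanSpace ℝ (Fin d) × ℝ) →L[ℝ] ℝ) (ωstar, βstar)) :
    (∫ x', (⟪x', ωstar⟫ + βstar)⁻¹ ^ 2 ∂ν) = C * np / nzero ∧
    ωstar = (C * np / (((np : ℝ) + nm) * lam)) •
      (xbarPlus - (∫ x', (⟪x', ωstar⟫ + βstar)⁻¹ ^ 2 ∂ν)⁻¹ •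
        ∫ x', ((⟪x', ωstar⟫ + βstar)⁻¹ ^ 2) • x' ∂ν) := by
  classical
  have hnpm : (0:ℝ) < (np : ℝ) + nm := by positivity
  have hnp' : ((np : ℝ)) ≠ 0 := by positivity
  have hsC : 0 < Real.sqrt C := Real.sqrt_pos.mpr hC
  have hcpos : 0 < θ * Real.sqrt C := mul_pos hθ hsC
  -- integrability of the inverse at the critical point
  have hmeas : AEStronglyMeasurable
      (fun x' : EuclideanSpace ℝ (Fin d) => -(⟪x', ωstar⟫ + βstar)⁻¹) ν := by
    have hcont : Continuous fun x' : EuclideanSpace ℝ (Fin d) => ⟪x', ωstar⟫ + βstar :=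
      (continuous_id.inner continuous_const).add continuous_const
    exact ((hcont.measurable.inv).neg).aestronglyMeasurable
  have hint0 : Integrable (fun x' : EuclideanSpace ℝ (Fin d) => -(⟪x', ωstar⟫ + βstar)⁻¹) ν := by
    refine ((integrable_const (1:ℝ)).add hInt1).mono' hmeas (Filter.Eventually.of_forall fun x' => ?_)
    simp only [Pi.add_apply]
    rw [Real.norm_eq_abs, abs_neg]
    nlinarith [sq_nonneg (|(⟪x', ωstar⟫ + βstar)⁻¹| - 1),
      abs_nonneg ((⟪x', ωstar⟫ + βstar)⁻¹), sq_abs ((⟪x', ωstar⟫ + βstar)⁻¹)]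
  -- dichotomy for the shifted integral
  have hTI : ∀ p : EuclideanSpace ℝ (Fin d) × ℝ,
      (∫ x', (-(⟪x', p.1⟫ + p.2)⁻¹ - θ * Real.sqrt C) ∂ν)
        = (∫ x', -(⟪x', p.1⟫ + p.2)⁻¹ ∂ν) - θ * Real.sqrt C ∨
      ((∫ x', (-(⟪x', p.1⟫ + p.2)⁻¹ - θ * Real.sqrt C) ∂ν) = 0 ∧
        (∫ x', -(⟪x', p.1⟫ + p.2)⁻¹ ∂ν) = 0) := by
    intro p
    by_cases hp : Integrable (fun x' => -(⟪x', p.1⟫ + p.2)⁻¹) ν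
    · left
      rw [integral_sub hp (integrable_const _), integral_const]
      simp
    · right
      constructor
      · refine integral_undef ?_
        intro h
        refine hp ?_
        have h2 := h.add (integrable_const (θ * Real.sqrt C))
        have he : (fun x' : EuclideanSpace ℝ (Fin d) =>
            (-(⟪x', p.1⟫ + p.2)⁻¹ - θ * Real.sqrt C)) + (fun _ => θ * Real.sqrt C)
            = fun x' => -(⟪x', p.1⟫ + p.2)⁻¹ := by
          funext x'
          simp
        rwa [he] at h2
      · exact integral_undef hp
  -- express the shifted integral through lF
  have hlF' : ∀ p : EuclideanSpace ℝ (Fin d) × ℝ,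
      (∫ x', (-(⟪x', p.1⟫ + p.2)⁻¹ - θ * Real.sqrt C) ∂ν) =
        nzero⁻¹ * ((lF p - lam / 2 * ‖p.1‖ ^ 2) * ((np:ℝ) + nm)
          - ∑ i, ((2 - θ) * Real.sqrt C - C * (⟪x i, p.1⟫ + p.2))) := by
    intro p
    have h : lF p = ((np : ℝ) + nm)⁻¹ *
          ((∑ i, ((2 - θ) * Real.sqrt C - C * (⟪x i, p.1⟫ + p.2))) +
            nzero * ∫ x', (-(⟪x', p.1⟫ + p.2)⁻¹ - θ * Real.sqrt C) ∂ν) +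
        lam / 2 * ‖p.1‖ ^ 2 := hlF p.1 p.2
    rw [h]
    field_simp
    ring
  -- continuity of the defect
  have hgcont : ContinuousAt (fun p : EuclideanSpace ℝ (Fin d) × ℝ =>
      (∫ x', (-(⟪x', p.1⟫ + p.2)⁻¹ - θ * Real.sqrt C) ∂ν)
        - (∫ x', -(⟪x', p.1⟫ + p.2)⁻¹ ∂ν)) (ωstar, βstar) := by
    have h1 : ContinuousAt lF (ωstar, βstar) := hCrit.continuousAt
    have h2 : ContinuousAt
        (fun p : EuclideanSpace ℝ (Fin d) × ℝ => ∫ x', -(⟪x', p.1⟫ + p.2)⁻¹ ∂ν)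
        (ωstar, βstar) := hDeriv.continuousAt
    have h3 : Continuous (fun p : EuclideanSpace ℝ (Fin d) × ℝ => lam / 2 * ‖p.1‖ ^ 2) :=
      continuous_const.mul ((continuous_fst.norm).pow 2)
    have h4 : Continuous (fun p : EuclideanSpace ℝ (Fin d) × ℝ =>
        ∑ i, ((2 - θ) * Real.sqrt C - C * (⟪x i, p.1⟫ + p.2))) := by
      refine continuous_finset_sum _ fun i _ => ?_
      exact continuous_const.sub
        (continuous_const.mul ((continuous_const.inner continuous_fst).add continuous_snd))
    have hrw : (fun p : EuclideanSpace ℝ (Fin d) × ℝ =>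
        (∫ x', (-(⟪x', p.1⟫ + p.2)⁻¹ - θ * Real.sqrt C) ∂ν)
          - (∫ x', -(⟪x', p.1⟫ + p.2)⁻¹ ∂ν)) =
        fun p => nzero⁻¹ * ((lF p - lam / 2 * ‖p.1‖ ^ 2) * ((np:ℝ) + nm)
          - ∑ i, ((2 - θ) * Real.sqrt C - C * (⟪x i, p.1⟫ + p.2)))
          - (∫ x', -(⟪x', p.1⟫ + p.2)⁻¹ ∂ν) := by
      funext p; rw [hlF' p]
    rw [hrw]
    exact (continuousAt_const.mul
      (((h1.sub h3.continuousAt).mul continuousAt_const).sub h4.continuousAt)).sub h2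
  -- value of the defect at the critical point
  have hgval : (∫ x', (-(⟪x', ωstar⟫ + βstar)⁻¹ - θ * Real.sqrt C) ∂ν)
      - (∫ x', -(⟪x', ωstar⟫ + βstar)⁻¹ ∂ν) = -(θ * Real.sqrt C) := by
    rw [integral_sub hint0 (integrable_const _), integral_const]
    simp
  -- eventually, the integral splits
  have hev : ∀ᶠ p : EuclideanSpace ℝ (Fin d) × ℝ in nhds (ωstar, βstar),
      (∫ x', (-(⟪x', p.1⟫ + p.2)⁻¹ - θ * Real.sqrt C) ∂ν)
        = (∫ x', -(⟪x', p.1⟫ + p.2)⁻¹ ∂ν) - θ * Real.sqrt C := by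
    have htend : Filter.Tendsto (fun p : EuclideanSpace ℝ (Fin d) × ℝ =>
        (∫ x', (-(⟪x', p.1⟫ + p.2)⁻¹ - θ * Real.sqrt C) ∂ν)
          - (∫ x', -(⟪x', p.1⟫ + p.2)⁻¹ ∂ν)) (nhds (ωstar, βstar))
        (nhds (-(θ * Real.sqrt C))) := by
      have := hgcont
      rw [ContinuousAt, hgval] at this
      exact this
    have hball := htend (Metric.ball_mem_nhds _ hcpos)
    filter_upwards [hball] with p hp
    rcases hTI p with h | ⟨h1', h2'⟩
    · exact h
    · exfalso
      simp only [Set.mem_preimage, Metric.mem_ball, Real.dist_eq, h1', h2', sub_zero] at hp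
      rw [sub_neg_eq_add, zero_add, abs_of_pos hcpos] at hp
      exact lt_irrefl _ hp
  -- the linear map B
  set B : (EuclideanSpace ℝ (Fin d) × ℝ) →L[ℝ] ℝ :=
    ∑ i, ((innerSL ℝ (x i)).comp (ContinuousLinearMap.fst ℝ (EuclideanSpace ℝ (Fin d)) ℝ)
      + ContinuousLinearMap.snd ℝ (EuclideanSpace ℝ (Fin d)) ℝ) with hBdef
  have hBapp : ∀ (h : EuclideanSpace ℝ (Fin d)) (t : ℝ), B (h, t) = ∑ i, (⟪x i, h⟫ + t) := by
    intro h t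
    simp [hBdef]
  have hSrw : ∀ p : EuclideanSpace ℝ (Fin d) × ℝ,
      (∑ i, ((2 - θ) * Real.sqrt C - C * (⟪x i, p.1⟫ + p.2)))
      = (np : ℝ) * ((2 - θ) * Real.sqrt C) - C * B p := by
    intro p
    have hB : B p = ∑ i, (⟪x i, p.1⟫ + p.2) := hBapp p.1 p.2
    rw [hB, Finset.sum_sub_distrib, Finset.sum_const, Finset.card_univ, Fintype.card_fin,
      Finset.mul_sum]
    simp [nsmul_eq_mul]
  -- the derivative of the nice formula
  have hIc : HasFDerivAt (fun p : EuclideanSpace ℝ (Fin d) × ℝ =>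
      (∫ x', -(⟪x', p.1⟫ + p.2)⁻¹ ∂ν) - θ * Real.sqrt C) D (ωstar, βstar) :=
    hDeriv.sub_const _
  have hnorm : HasFDerivAt (fun p : EuclideanSpace ℝ (Fin d) × ℝ => ‖p.1‖ ^ 2)
      ((2:ℝ) • ((innerSL ℝ ωstar).comp
        (ContinuousLinearMap.fst ℝ (EuclideanSpace ℝ (Fin d)) ℝ))) (ωstar, βstar) := by
    have h0 : HasFDerivAt (fun p : EuclideanSpace ℝ (Fin d) × ℝ => ‖p.1‖ ^ 2)
        ((2:ℕ) • ((innerSL ℝ ωstar).comp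
          (ContinuousLinearMap.fst ℝ (EuclideanSpace ℝ (Fin d)) ℝ))) (ωstar, βstar) :=
      (hasFDerivAt_fst
        (p := ((ωstar, βstar) : EuclideanSpace ℝ (Fin d) × ℝ))).norm_sq
    have h2g : (2:ℕ) • ((innerSL ℝ ωstar).comp
        (ContinuousLinearMap.fst ℝ (EuclideanSpace ℝ (Fin d)) ℝ)) = (2:ℝ) • ((innerSL ℝ ωstar).comp
        (ContinuousLinearMap.fst ℝ (EuclideanSpace ℝ (Fin d)) ℝ)) := by
      rw [← Nat.cast_smul_eq_nsmul ℝ]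
      norm_num
    rwa [h2g] at h0
  have hF : HasFDerivAt (fun p : EuclideanSpace ℝ (Fin d) × ℝ =>
      ((np:ℝ) + nm)⁻¹ * (((np : ℝ) * ((2 - θ) * Real.sqrt C) - C * B p)
        + nzero * ((∫ x', -(⟪x', p.1⟫ + p.2)⁻¹ ∂ν) - θ * Real.sqrt C))
      + lam / 2 * ‖p.1‖ ^ 2)
      ((((np:ℝ) + nm)⁻¹ • (((0 : (EuclideanSpace ℝ (Fin d) × ℝ) →L[ℝ] ℝ) - C • B) + nzero • D))
        + (lam / 2) • ((2:ℝ) • ((innerSL ℝ ωstar).comp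
          (ContinuousLinearMap.fst ℝ (EuclideanSpace ℝ (Fin d)) ℝ))))
      (ωstar, βstar) := by
    exact ((((hasFDerivAt_const _ _).sub (B.hasFDerivAt.const_mul C)).add
      (hIc.const_mul nzero)).const_mul _).add (hnorm.const_mul (lam / 2))
  -- lF eventually equals the nice formula
  have hlFF : lF =ᶠ[nhds (ωstar, βstar)] (fun p : EuclideanSpace ℝ (Fin d) × ℝ =>
      ((np:ℝ) + nm)⁻¹ * (((np : ℝ) * ((2 - θ) * Real.sqrt C) - C * B p)
        + nzero * ((∫ x', -(⟪x', p.1⟫ + p.2)⁻¹ ∂ν) - θ * Real.sqrt C))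
      + lam / 2 * ‖p.1‖ ^ 2) := by
    filter_upwards [hev] with p hp
    have h : lF p = ((np : ℝ) + nm)⁻¹ *
          ((∑ i, ((2 - θ) * Real.sqrt C - C * (⟪x i, p.1⟫ + p.2))) +
            nzero * ∫ x', (-(⟪x', p.1⟫ + p.2)⁻¹ - θ * Real.sqrt C) ∂ν) +
        lam / 2 * ‖p.1‖ ^ 2 := hlF p.1 p.2
    rw [h, hp, hSrw p]
  have hL : ((((np:ℝ) + nm)⁻¹ • (((0 : (EuclideanSpace ℝ (Fin d) × ℝ) →L[ℝ] ℝ) - C • B)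
        + nzero • D))
      + (lam / 2) • ((2:ℝ) • ((innerSL ℝ ωstar).comp
        (ContinuousLinearMap.fst ℝ (EuclideanSpace ℝ (Fin d)) ℝ))))
      = (0 : (EuclideanSpace ℝ (Fin d) × ℝ) →L[ℝ] ℝ) :=
    (hF.congr_of_eventuallyEq hlFF).unique hCrit
  have key : ∀ (h : EuclideanSpace ℝ (Fin d)) (t : ℝ),
      ((np:ℝ) + nm)⁻¹ * ((0 - C * B (h, t)) + nzero * D (h, t))
        + lam / 2 * (2 * ⟪ωstar, h⟫) = 0 := by
    intro h t
    have h0 := DFunLike.congr_fun hL (h, t)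
    simp only [ContinuousLinearMap.add_apply, ContinuousLinearMap.coe_smul', Pi.smul_apply,
      ContinuousLinearMap.sub_apply, ContinuousLinearMap.zero_apply,
      ContinuousLinearMap.coe_comp', Function.comp_apply, ContinuousLinearMap.coe_fst',
      innerSL_apply_apply, smul_eq_mul] at h0
    linear_combination h0
  -- first conclusion
  have hB1 : B (0, 1) = (np : ℝ) := by
    rw [hBapp]; simp
  have hDapp1 : D ((0 : EuclideanSpace ℝ (Fin d)), (1:ℝ))
      = ∫ x', (⟪x', ωstar⟫ + βstar)⁻¹ ^ 2 ∂ν := by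
    rw [hD]
    congr 1
    funext x'
    simp
  have eq1 : (∫ x', (⟪x', ωstar⟫ + βstar)⁻¹ ^ 2 ∂ν) = C * np / nzero := by
    have h0 := key 0 1
    rw [hB1, hDapp1] at h0
    simp only [inner_zero_right, mul_zero, add_zero, zero_sub] at h0
    have h1 := congrArg (fun z => ((np:ℝ) + nm) * z) h0
    simp only [mul_zero] at h1
    rw [← mul_assoc, mul_inv_cancel₀ (ne_of_gt hnpm), one_mul] at h1
    rw [eq_div_iff (ne_of_gt hnzero)]
    linear_combination h1
  refine ⟨eq1, ?_⟩
  -- second conclusion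
  have hB2 : ∀ h : EuclideanSpace ℝ (Fin d), B (h, 0) = ⟪∑ i, x i, h⟫ := by
    intro h
    rw [hBapp]
    simp [sum_inner]
  have hDapp2 : ∀ h : EuclideanSpace ℝ (Fin d),
      D (h, 0) = ⟪∫ x', ((⟪x', ωstar⟫ + βstar)⁻¹ ^ 2) • x' ∂ν, h⟫ := by
    intro h
    rw [hD]
    have hcongr : (∫ x', (⟪x', ωstar⟫ + βstar)⁻¹ ^ 2 * (⟪x', h⟫ + 0) ∂ν)
        = ∫ x', ⟪h, ((⟪x', ωstar⟫ + βstar)⁻¹ ^ 2) • x'⟫ ∂ν := by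
      congr 1
      funext x'
      rw [real_inner_smul_right, real_inner_comm h x']
      ring
    rw [hcongr, integral_inner hInt2 h, real_inner_comm]
  have hω : lam • ωstar =
      ((((np:ℝ) + nm)⁻¹ * C) • (∑ i, x i) : EuclideanSpace ℝ (Fin d))
        - ((((np:ℝ) + nm)⁻¹ * nzero) •
          (∫ x', ((⟪x', ωstar⟫ + βstar)⁻¹ ^ 2) • x' ∂ν)) := by
    have hv : ∀ h : EuclideanSpace ℝ (Fin d),
        ⟪lam • ωstar - (((((np:ℝ) + nm)⁻¹ * C) • (∑ i, x i) : EuclideanSpace ℝ (Fin d))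
          - ((((np:ℝ) + nm)⁻¹ * nzero) •
            (∫ x', ((⟪x', ωstar⟫ + βstar)⁻¹ ^ 2) • x' ∂ν))), h⟫ = 0 := by
      intro h
      have h0 := key h 0
      rw [hB2 h, hDapp2 h] at h0
      simp only [inner_sub_left, real_inner_smul_left]
      linear_combination h0
    have hself := hv (lam • ωstar -
      (((((np:ℝ) + nm)⁻¹ * C) • (∑ i, x i) : EuclideanSpace ℝ (Fin d))
        - ((((np:ℝ) + nm)⁻¹ * nzero) •
          (∫ x', ((⟪x', ωstar⟫ + βstar)⁻¹ ^ 2) • x' ∂ν))))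
    exact sub_eq_zero.mp (inner_self_eq_zero.mp hself)
  rw [hxbar, eq1]
  apply smul_right_injective (EuclideanSpace ℝ (Fin d)) (ne_of_gt hlam)
  show lam • ωstar = lam • _
  have ha : lam * (C * (np:ℝ) / (((np:ℝ) + nm) * lam)) * ((np:ℝ))⁻¹ = ((np:ℝ) + nm)⁻¹ * C := by
    field_simp
  have hb : lam * (C * (np:ℝ) / (((np:ℝ) + nm) * lam)) * (C * (np:ℝ) / nzero)⁻¹
      = ((np:ℝ) + nm)⁻¹ * nzero := by
    rw [inv_div]
    field_simp
  rw [hω]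
  rw [smul_sub, smul_sub, smul_smul, smul_smul, smul_smul, smul_smul, ha, hb]
end

section
/- (HDLSS geometric optimization, DWD-like regime) Let n₊, n₋, S > 0 with n₊ ≤ n₋, and let k ≥ 0 satisfy k·S < 1 + √(n₊/n₋). Consider minimizing g(a,b) = n₊·max(1/a − k, 0) + n₋·max(1/b − k, 0) over the feasible set {(a,b) ∈ ℝ² : a > 0, b > 0, a + b = S}. Then (a*, b*) = ( S·√n₊/(√n₊+√n₋), S·√n₋/(√n₊+√n₋) ) is the unique global minimizer; it satisfies a*/b* = √(n₊/n₋), and the minimum value equals (√n₊+√n₋)²/S − (n₊+n₋)·k. -/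
/-- The total FLAME loss in the HDLSS geometric representation, as a function of the
distances `a` and `b` of the two class simplices to the separating hyperplane,
with `k = θ√C`. -/
noncomputable def hdlssLoss (np nm k a b : ℝ) : ℝ :=
  np * max (1 / a - k) 0 + nm * max (1 / b - k) 0

lemma hdlss_key (p m a b : ℝ) (ha : 0 < a) (hb : 0 < b) :
    p ^ 2 / a + m ^ 2 / b
      = (p + m) ^ 2 / (a + b) + (p * b - m * a) ^ 2 / (a * b * (a + b)) := by
  have hab : 0 < a + b := by linarith
  field_simp
  ring

theorem hdlss_dwd_like_regime (np nm S k : ℝ)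
    (hnp : 0 < np) (hnm : 0 < nm) (hS : 0 < S) (hle : np ≤ nm)
    (hk : 0 ≤ k) (hkS : k * S < 1 + Real.sqrt (np / nm)) :
    let astar := S * Real.sqrt np / (Real.sqrt np + Real.sqrt nm)
    let bstar := S * Real.sqrt nm / (Real.sqrt np + Real.sqrt nm)
    (0 < astar ∧ 0 < bstar ∧ astar + bstar = S) ∧
    (∀ a b : ℝ, 0 < a → 0 < b → a + b = S →
      hdlssLoss np nm k astar bstar ≤ hdlssLoss np nm k a b ∧
      (hdlssLoss np nm k a b = hdlssLoss np nm k astar bstar → a = astar ∧ b = bstar)) ∧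
    astar / bstar = Real.sqrt (np / nm) ∧
    hdlssLoss np nm k astar bstar = (Real.sqrt np + Real.sqrt nm) ^ 2 / S - (np + nm) * k := by
  set p := Real.sqrt np with hp_def
  set m := Real.sqrt nm with hm_def
  have hp : 0 < p := Real.sqrt_pos.mpr hnp
  have hm : 0 < m := Real.sqrt_pos.mpr hnm
  have hpm : 0 < p + m := by linarith
  have hp2 : p ^ 2 = np := Real.sq_sqrt hnp.le
  have hm2 : m ^ 2 = nm := Real.sq_sqrt hnm.le
  have hple : p ≤ m := Real.sqrt_le_sqrt hle
  have hdiv : Real.sqrt (np / nm) = p / m := Real.sqrt_div hnp.le nm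
  rw [hdiv] at hkS
  -- k * S * m < m + p
  have hkSm : k * S * m < m + p := by
    have h := mul_lt_mul_of_pos_right hkS hm
    have : (1 + p / m) * m = m + p := by field_simp
    linarith [this ▸ h]
  intro astar bstar
  have hastar : 0 < astar := by positivity
  have hbstar : 0 < bstar := by positivity
  have hsum : astar + bstar = S := by
    show S * p / (p + m) + S * m / (p + m) = S
    field_simp
  -- the maxima are not clipped at (astar, bstar)
  have hka : k * astar < 1 := by
    show k * (S * p / (p + m)) < 1
    rw [← mul_div_assoc, div_lt_one hpm]
    have h1 : k * S * p ≤ k * S * m := by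
      nlinarith [mul_nonneg (mul_nonneg hk hS.le) (sub_nonneg.mpr hple)]
    nlinarith
  have hkb : k * bstar < 1 := by
    show k * (S * m / (p + m)) < 1
    rw [← mul_div_assoc, div_lt_one hpm]
    nlinarith
  have hamax : max (1 / astar - k) 0 = 1 / astar - k := by
    apply max_eq_left
    rw [sub_nonneg, le_div_iff₀ hastar]
    linarith
  have hbmax : max (1 / bstar - k) 0 = 1 / bstar - k := by
    apply max_eq_left
    rw [sub_nonneg, le_div_iff₀ hbstar]
    linarith
  -- value at the optimum
  have hval : hdlssLoss np nm k astar bstar = (p + m) ^ 2 / S - (np + nm) * k := by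
    rw [hdlssLoss, hamax, hbmax]
    show np * (1 / (S * p / (p + m)) - k) + nm * (1 / (S * m / (p + m)) - k)
        = (p + m) ^ 2 / S - (np + nm) * k
    rw [← hp2, ← hm2]
    field_simp
    ring
  refine ⟨⟨hastar, hbstar, hsum⟩, ?_, ?_, hval⟩
  · intro a b ha hb hab
    have key := hdlss_key p m a b ha hb
    rw [hab] at key
    have hsq : 0 ≤ (p * b - m * a) ^ 2 / (a * b * S) := by positivity
    have hLB : np / a + nm / b ≥ (p + m) ^ 2 / S := by
      rw [← hp2, ← hm2, key]; linarith
    have hmax1 : np * (1 / a - k) ≤ np * max (1 / a - k) 0 :=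
      mul_le_mul_of_nonneg_left (le_max_left _ _) hnp.le
    have hmax2 : nm * (1 / b - k) ≤ nm * max (1 / b - k) 0 :=
      mul_le_mul_of_nonneg_left (le_max_left _ _) hnm.le
    have hL : (p + m) ^ 2 / S - (np + nm) * k ≤ hdlssLoss np nm k a b := by
      rw [hdlssLoss]
      have e1 : np * (1 / a - k) = np / a - np * k := by ring_nf
      have e2 : nm * (1 / b - k) = nm / b - nm * k := by ring_nf
      have e3 : (np + nm) * k = np * k + nm * k := by ring
      linarith [hmax1, hmax2, hLB]
    constructor
    · rw [hval]; exact hL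
    · intro heq
      rw [hval] at heq
      -- equality forces the untruncated bound to be tight and the square zero
      have hLtight : np * (1 / a - k) + nm * (1 / b - k)
          = (p + m) ^ 2 / S - (np + nm) * k := by
        have h1 : np * (1 / a - k) + nm * (1 / b - k)
            = np / a + nm / b - (np + nm) * k := by field_simp; ring
        have h2 : np * (1 / a - k) + nm * (1 / b - k) ≤ hdlssLoss np nm k a b := by
          rw [hdlssLoss]; linarith
        rw [heq] at h2
        linarith [hLB, h1 ▸ h2, h1]
      have hsqzero : (p * b - m * a) ^ 2 / (a * b * S) = 0 := by
        have h1 : np * (1 / a - k) + nm * (1 / b - k)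
            = np / a + nm / b - (np + nm) * k := by field_simp; ring
        rw [h1] at hLtight
        rw [← hp2, ← hm2, key] at hLtight
        linarith
      have hz : p * b - m * a = 0 := by
        have hpos : (a * b * S) ≠ 0 := by positivity
        rcases div_eq_zero_iff.mp hsqzero with h | h
        · exact pow_eq_zero_iff (two_ne_zero) |>.mp h
        · exact absurd h hpos
      have haa : a = astar := by
        show a = S * p / (p + m)
        rw [eq_div_iff hpm.ne']
        linear_combination p * hab - hz
      exact ⟨haa, by linarith⟩
  · rw [hdiv]
    show S * p / (p + m) / (S * m / (p + m)) = p / m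
    field_simp
end

section
/- (HDLSS geometric optimization, intermediate regime) Let n₊, n₋, S > 0 with n₊ ≤ n₋, and let k > 0 satisfy 1 + √(n₊/n₋) ≤ k·S < 2. Consider minimizing g(a,b) = n₊·max(1/a − k, 0) + n₋·max(1/b − k, 0) over the feasible set {(a,b) ∈ ℝ² : a > 0, b > 0, a + b = S}. Then (a*, b*) = (S − 1/k, 1/k) is a global minimizer, and the minimum value equals n₊·( 1/(S − 1/k) − k ). -/
set_option maxHeartbeats 1000000 in
theorem hdlss_intermediate_regime (np nm S k : ℝ)
    (hnp : 0 < np) (hnm : 0 < nm) (hS : 0 < S) (hle : np ≤ nm)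
    (hk : 0 < k) (hkS₁ : 1 + Real.sqrt (np / nm) ≤ k * S) (hkS₂ : k * S < 2) :
    (∀ a b : ℝ, 0 < a → 0 < b → a + b = S →
      hdlssLoss np nm k (S - 1 / k) (1 / k) ≤ hdlssLoss np nm k a b) ∧
    hdlssLoss np nm k (S - 1 / k) (1 / k) = np * (1 / (S - 1 / k) - k) := by
  have ht : (0:ℝ) < 1 / k := by positivity
  have hsq0 : 0 < Real.sqrt (np / nm) := Real.sqrt_pos.2 (by positivity)
  have hkS1 : 1 < k * S := by linarith
  have hSt : 0 < S - 1 / k := by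
    rw [sub_pos, div_lt_iff₀ hk]; linarith
  have hpos : 0 < 1 / (S - 1 / k) - k := by
    rw [sub_pos, lt_div_iff₀ hSt]
    have : k * (S - 1 / k) = k * S - 1 := by field_simp
    rw [this]; linarith
  -- key: np * (1/k)^2 ≤ nm * (S - 1/k)^2
  have hsq : np * (1 / k) ^ 2 ≤ nm * (S - 1 / k) ^ 2 := by
    have h1 : Real.sqrt (np / nm) ^ 2 = np / nm := Real.sq_sqrt (by positivity)
    have h2 : Real.sqrt (np / nm) ≤ k * S - 1 := by linarith
    have h3 : np / nm ≤ (k * S - 1) ^ 2 := by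
      rw [← h1]; exact pow_le_pow_left₀ (Real.sqrt_nonneg _) h2 2
    have h4 : np ≤ nm * (k * S - 1) ^ 2 := by
      rw [div_le_iff₀ hnm] at h3; linarith
    have h5 : (k * S - 1) * (1 / k) = S - 1 / k := by field_simp
    calc np * (1 / k) ^ 2 ≤ nm * (k * S - 1) ^ 2 * (1 / k) ^ 2 :=
          mul_le_mul_of_nonneg_right h4 (sq_nonneg _)
      _ = nm * ((k * S - 1) * (1 / k)) ^ 2 := by ring
      _ = nm * (S - 1 / k) ^ 2 := by rw [h5]
  have hval : hdlssLoss np nm k (S - 1 / k) (1 / k) = np * (1 / (S - 1 / k) - k) := by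
    unfold hdlssLoss
    rw [one_div_one_div, max_eq_left hpos.le, sub_self, max_self, mul_zero, add_zero]
  refine ⟨?_, hval⟩
  intro a b ha hb hab
  rw [hval]
  unfold hdlssLoss
  rcases le_or_gt (1 / k) b with hbt | hbt
  · -- b ≥ 1/k, so a ≤ S - 1/k
    have haSt : a ≤ S - 1 / k := by linarith
    have h1 : 1 / (S - 1 / k) ≤ 1 / a := one_div_le_one_div_of_le ha haSt
    have h2 : 1 / (S - 1 / k) - k ≤ max (1 / a - k) 0 :=
      le_trans (by linarith) (le_max_left _ _)
    nlinarith [mul_nonneg hnm.le (le_max_right (1 / b - k) 0),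
      mul_le_mul_of_nonneg_left h2 hnp.le]
  · rcases le_or_gt (1 / k) a with hat | hat
    · -- b < 1/k ≤ a, so b ≤ S - 1/k
      have hbSt : b ≤ S - 1 / k := by linarith
      have h1 : 1 / (S - 1 / k) ≤ 1 / b := one_div_le_one_div_of_le hb hbSt
      have h2 : 1 / (S - 1 / k) - k ≤ max (1 / b - k) 0 :=
        le_trans (by linarith) (le_max_left _ _)
      nlinarith [mul_nonneg hnp.le (le_max_right (1 / a - k) 0),
        mul_le_mul_of_nonneg_left h2 hnm.le, hpos, hle]
    · -- both a < 1/k and b < 1/k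
      subst hab
      obtain ⟨t, htpos, hteq⟩ : ∃ t : ℝ, 0 < t ∧ 1 / k = t := ⟨1 / k, ht, rfl⟩
      have hk_eq : k = 1 / t := by rw [← hteq, one_div_one_div]
      rw [hteq] at hsq hbt hat hSt ⊢
      have h1a : 0 ≤ 1 / a - k := by
        rw [sub_nonneg, hk_eq]
        exact le_of_lt (one_div_lt_one_div_of_lt ha hat)
      have h1b : 0 ≤ 1 / b - k := by
        rw [sub_nonneg, hk_eq]
        exact le_of_lt (one_div_lt_one_div_of_lt hb hbt)
      rw [max_eq_left h1a, max_eq_left h1b, hk_eq]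
      have haSt : (a + b) - t < a := by linarith
      -- product bound: np * (b * t) ≤ nm * (a * ((a + b) - t))
      have e1 : 0 ≤ np * (t * (t - b)) := by
        apply mul_nonneg hnp.le; apply mul_nonneg htpos.le; linarith
      have e2 : 0 ≤ nm * (((a + b) - t) * (a - ((a + b) - t))) := by
        apply mul_nonneg hnm.le; apply mul_nonneg hSt.le; linarith
      have s1 : np * (b * t) ≤ np * t ^ 2 := by linarith [e1]
      have s2 : nm * ((a + b) - t) ^ 2 ≤ nm * (a * ((a + b) - t)) := by linarith [e2]
      have hprod : np * (b * t) ≤ nm * (a * ((a + b) - t)) :=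
        le_trans (le_trans s1 hsq) s2
      have hdiff : np * (1 / a - 1 / t) + nm * (1 / b - 1 / t)
            - np * (1 / ((a + b) - t) - 1 / t) =
          ((t - b) * (nm * (a * ((a + b) - t)) - np * (b * t))) /
            (a * b * t * ((a + b) - t)) := by
        rw [eq_div_iff (ne_of_gt (mul_pos (mul_pos (mul_pos ha hb) htpos) hSt))]
        field_simp [ha.ne', hb.ne', htpos.ne', hSt.ne']
        ring
      have hnum : 0 ≤ ((t - b) * (nm * (a * ((a + b) - t)) - np * (b * t))) /
          (a * b * t * ((a + b) - t)) := by
        apply div_nonneg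
        · apply mul_nonneg (by linarith) (by linarith)
        · exact (mul_pos (mul_pos (mul_pos ha hb) htpos) hSt).le
      linarith [hdiff, hnum]
end

section
/- (Key inequality for sure classification of the positive class, Theorem on HDLSS asymptotics) Let n₊, n₋, d, C, θ > 0 be real numbers and σ, τ, μ ≥ 0. Set ν = √(μ² + σ²/n₊ + τ²/n₋) and T = ( 1/(2θ√(dC)) + √( 1/(4θ²dC) + σ²/n₊ ) )² − σ²/n₊. If μ² > T − τ²/n₋, then ν > 0 and √d·(μ² + τ²/n₋)/ν > 1/(θ√C). -/
lemma hdlss_aux_quad (x r s a : ℝ) (hx : 0 < x) (hs : 0 ≤ s) (hrx : x ≤ r)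
    (hr2 : r ^ 2 = x ^ 2 + s) (hTa : a > 2 * x * (x + r)) :
    a ^ 2 > 4 * x ^ 2 * (a + s) := by
  have h1 : 0 < a - 2 * x * (x + r) := by linarith
  have h2 : 0 < a - 2 * x * (x - r) := by
    nlinarith [mul_nonneg hx.le (sub_nonneg.mpr hrx)]
  nlinarith [mul_pos h1 h2]

lemma hdlss_aux_key (x a ν : ℝ) (hx : 0 < x) (ha : 0 < a) (hν : 0 ≤ ν)
    (hq : a ^ 2 > 4 * x ^ 2 * ν ^ 2) : a > 2 * x * ν := by
  nlinarith [mul_nonneg (mul_nonneg (by norm_num : (0:ℝ) ≤ 2) hx.le) hν]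

theorem hdlss_sure_classification_positive (np nm d C θ σ τ μ : ℝ)
    (hnp : 0 < np) (hnm : 0 < nm) (hd : 0 < d) (hC : 0 < C) (hθ : 0 < θ)
    (hσ : 0 ≤ σ) (hτ : 0 ≤ τ) (hμ : 0 ≤ μ)
    (ν : ℝ) (hν : ν = Real.sqrt (μ ^ 2 + σ ^ 2 / np + τ ^ 2 / nm))
    (T : ℝ)
    (hT : T = (1 / (2 * θ * Real.sqrt (d * C)) +
        Real.sqrt (1 / (4 * θ ^ 2 * d * C) + σ ^ 2 / np)) ^ 2 - σ ^ 2 / np)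
    (h : μ ^ 2 > T - τ ^ 2 / nm) :
    0 < ν ∧ Real.sqrt d * (μ ^ 2 + τ ^ 2 / nm) / ν > 1 / (θ * Real.sqrt C) := by
  have hdC : 0 < d * C := mul_pos hd hC
  have hsdC : 0 < Real.sqrt (d * C) := Real.sqrt_pos.mpr hdC
  set s := σ ^ 2 / np with hs_def
  have hs : 0 ≤ s := div_nonneg (sq_nonneg σ) hnp.le
  set x := 1 / (2 * θ * Real.sqrt (d * C)) with hx_def
  have hx : 0 < x := by positivity
  have hx2 : x ^ 2 = 1 / (4 * θ ^ 2 * d * C) := by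
    rw [hx_def, div_pow, mul_pow, mul_pow, Real.sq_sqrt hdC.le]
    ring_nf
  set r := Real.sqrt (x ^ 2 + s) with hr_def
  have hr0 : 0 ≤ r := Real.sqrt_nonneg _
  have hr2 : r ^ 2 = x ^ 2 + s := Real.sq_sqrt (by positivity)
  have hrx : x ≤ r := by nlinarith [hr2, hr0, hx]
  set a := μ ^ 2 + τ ^ 2 / nm with ha_def
  have hTeq : T = (x + r) ^ 2 - s := by rw [hT, hr_def, ← hx2]
  clear_value a r x s
  have hTa : a > 2 * x * (x + r) := by nlinarith [h, hr2, hTeq]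
  have ha : 0 < a := by nlinarith [hx, hrx]
  have hν' : ν = Real.sqrt (a + s) := by
    rw [hν]; congr 1; rw [ha_def, hs_def]; ring
  have hνpos : 0 < ν := by
    rw [hν']; exact Real.sqrt_pos.mpr (by linarith)
  have hν2 : ν ^ 2 = a + s := by
    rw [hν']; exact Real.sq_sqrt (by linarith)
  have hq : a ^ 2 > 4 * x ^ 2 * ν ^ 2 := by
    rw [hν2]; exact hdlss_aux_quad x r s a hx hs hrx hr2 hTa
  have hkey : a > 2 * x * ν := hdlss_aux_key x a ν hx ha hνpos.le hq
  refine ⟨hνpos, ?_⟩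
  have hθC : 0 < θ * Real.sqrt C := mul_pos hθ (Real.sqrt_pos.mpr hC)
  rw [gt_iff_lt, div_lt_div_iff₀ hθC hνpos, one_mul]
  have hsqrt : Real.sqrt d * Real.sqrt C = Real.sqrt (d * C) :=
    (Real.sqrt_mul hd.le C).symm
  have hxinv : 2 * x * (θ * Real.sqrt (d * C)) = 1 := by
    rw [hx_def]; field_simp
  have hmul := mul_lt_mul_of_pos_right hkey (mul_pos hθ hsdC)
  have e : 2 * x * ν * (θ * Real.sqrt (d * C)) = ν := by
    calc 2 * x * ν * (θ * Real.sqrt (d * C))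
        = 2 * x * (θ * Real.sqrt (d * C)) * ν := by ring
      _ = 1 * ν := by rw [hxinv]
      _ = ν := one_mul ν
  have hstep : ν < a * (θ * Real.sqrt (d * C)) := by
    rw [← e]; exact hmul
  calc ν < a * (θ * Real.sqrt (d * C)) := hstep
    _ = Real.sqrt d * a * (θ * Real.sqrt C) := by rw [← hsqrt]; ring
end

section
/- (Key inequality for sure classification of the negative class, Theorem on HDLSS asymptotics) Let n₊, n₋, d, C, θ > 0 be real numbers and σ, τ, μ ≥ 0. Set ν = √(μ² + σ²/n₊ + τ²/n₋) and T = ( 1/(2θ√(dC)) + √( 1/(4θ²dC) + σ²/n₊ ) )² − σ²/n₊, and assume ν > 0. If τ²/n₋ < T, then √d·(τ²/n₋)/ν < 1/(θ√C). -/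
set_option maxHeartbeats 1000000 in
theorem hdlss_sure_classification_negative (np nm d C θ σ τ μ : ℝ)
    (hnp : 0 < np) (hnm : 0 < nm) (hd : 0 < d) (hC : 0 < C) (hθ : 0 < θ)
    (hσ : 0 ≤ σ) (hτ : 0 ≤ τ) (hμ : 0 ≤ μ)
    (ν : ℝ) (hν : ν = Real.sqrt (μ ^ 2 + σ ^ 2 / np + τ ^ 2 / nm)) (hνpos : 0 < ν)
    (T : ℝ)
    (hT : T = (1 / (2 * θ * Real.sqrt (d * C)) +
        Real.sqrt (1 / (4 * θ ^ 2 * d * C) + σ ^ 2 / np)) ^ 2 - σ ^ 2 / np)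
    (h : τ ^ 2 / nm < T) :
    Real.sqrt d * (τ ^ 2 / nm) / ν < 1 / (θ * Real.sqrt C) := by
  set s := σ ^ 2 / np with hsdef
  set t := τ ^ 2 / nm with htdef
  have hs0 : 0 ≤ s := by positivity
  have ht0 : 0 ≤ t := by positivity
  have hdC : 0 < d * C := by positivity
  have hsqdC : 0 < Real.sqrt (d * C) := Real.sqrt_pos.mpr hdC
  set a := 1 / (2 * θ * Real.sqrt (d * C)) with hadef
  have ha0 : 0 < a := by positivity
  have hkey : 1 / (4 * θ ^ 2 * d * C) = a ^ 2 := by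
    rw [hadef, div_pow, one_pow, mul_pow, mul_pow, Real.sq_sqrt hdC.le]; ring
  set r := Real.sqrt (a ^ 2 + s) with hrdef
  have hr0 : 0 ≤ r := Real.sqrt_nonneg _
  have hr2 : r ^ 2 = a ^ 2 + s := Real.sq_sqrt (by positivity)
  have hra : a ≤ r := by
    nlinarith [Real.sqrt_nonneg (a ^ 2 + s)]
  have hTr : T = (a + r) ^ 2 - s := by rw [hT, hkey]
  -- u = sqrt (t + s)
  set u := Real.sqrt (t + s) with hudef
  have hu0 : 0 ≤ u := Real.sqrt_nonneg _
  have hu2 : u ^ 2 = t + s := Real.sq_sqrt (by positivity)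
  have huR : u < a + r := by
    have h1 : t + s < (a + r) ^ 2 := by rw [hTr] at h; linarith
    nlinarith [hu0, ha0, hr0]
  -- t < 2 a ν
  have huν : u ≤ ν := by
    rw [hudef, hν]
    apply Real.sqrt_le_sqrt
    linarith [sq_nonneg μ]
  have htu : t < 2 * a * ν := by
    rcases eq_or_lt_of_le ht0 with h0 | h0
    · rw [← h0]; exact mul_pos (mul_pos two_pos ha0) hνpos
    · have hupos : 0 < u := by
        rw [hudef]; exact Real.sqrt_pos.mpr (by linarith)
      have : t < 2 * a * u := by nlinarith [mul_pos ha0 hupos]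
      nlinarith [mul_pos ha0 hupos]
  -- conclude
  have hsqd : 0 < Real.sqrt d := Real.sqrt_pos.mpr hd
  have hsqC : 0 < Real.sqrt C := Real.sqrt_pos.mpr hC
  have hrhs : 1 / (θ * Real.sqrt C) = 2 * a * Real.sqrt d := by
    rw [hadef, Real.sqrt_mul hd.le]
    field_simp
  rw [hrhs, div_lt_iff₀ hνpos]
  calc Real.sqrt d * t < Real.sqrt d * (2 * a * ν) := by
        exact (mul_lt_mul_iff_right₀ hsqd).mpr htu
    _ = 2 * a * Real.sqrt d * ν := by ring
end
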